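/- For every integer n ≥ 1, if W satisfies the minimal constraints and W·ln W and the powers W^k for 1 ≤ k ≤ n+1 are integrable, then S[W] ≥ ln π + ∑_{k=1}^{n} (1/k) · (1 − μ/2)^k, where μ is the purity of W. -/

import Mathlib

open Real MeasureTheory Finset
open scoped ENNReal NNReal

lemma wigner_log_series (n : ℕ) (x : ℝ) (hx0 : 0 < x) (hx1 : x ≤ 1) :
    ∑ k ∈ Finset.Icc 1 n, (1 / (k:ℝ)) * (1 - x) ^ k ≤ -Real.log x := by
  set y := 1 - x with hy
  have hy0 : 0 ≤ y := by simp [hy]; linarith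
  have hy1 : |y| < 1 := by rw [abs_of_nonneg hy0]; simp [hy]; linarith
  have h := Real.hasSum_pow_div_log_of_abs_lt_one hy1
  have hx : 1 - y = x := by simp [hy]
  rw [hx] at h
  have heq : ∑ k ∈ Finset.Icc 1 n, (1 / (k:ℝ)) * y ^ k
      = ∑ j ∈ Finset.range n, y ^ (j + 1) / (j + 1) := by
    induction n with
    | zero => simp
    | succ m ih =>
      rw [Finset.sum_Icc_succ_top (by omega), Finset.sum_range_succ, ih]
      push_cast
      ring
  rw [heq]
  exact sum_le_hasSum _ (fun j _ => by positivity) h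

lemma wigner_jensen_step (W : ℝ × ℝ → ℝ) (hmeas : Measurable W)
    (hpos : ∀ z, 0 ≤ W z) (hnorm : ∫ z, W z = 1)
    (hbound : ∀ z, Real.pi * W z ≤ 1) (hW1 : Integrable W) (k : ℕ) :
    (∫ z, W z * (1 - Real.pi * W z)) ^ k ≤ ∫ z, W z * (1 - Real.pi * W z) ^ k := by
  set ν : Measure (ℝ × ℝ) := volume.withDensity (fun z => ((W z).toNNReal : ℝ≥0∞)) with hν
  have hdens : Measurable (fun z => (W z).toNNReal) := measurable_real_toNNReal.comp hmeas
  haveI : IsProbabilityMeasure ν := by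
    constructor
    rw [hν, withDensity_apply _ MeasurableSet.univ, setLIntegral_univ]
    have : ∫⁻ z, ((W z).toNNReal : ℝ≥0∞) = ENNReal.ofReal (∫ z, W z) := by
      rw [ofReal_integral_eq_lintegral_ofReal hW1 (ae_of_all _ hpos)]
      rfl
    rw [this, hnorm, ENNReal.ofReal_one]
  have hsmul : ∀ g : ℝ × ℝ → ℝ, ∫ z, g z ∂ν = ∫ z, W z * g z := by
    intro g
    rw [hν, integral_withDensity_eq_integral_smul hdens g]
    refine integral_congr_ae (ae_of_all _ fun z => ?_)
    simp [NNReal.smul_def, Real.coe_toNNReal _ (hpos z)]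
  set f : ℝ × ℝ → ℝ := fun z => 1 - Real.pi * W z with hf
  have hfmem : ∀ z, f z ∈ Set.Icc (0:ℝ) 1 := fun z =>
    ⟨by simp [hf]; linarith [hbound z], by
      have := mul_nonneg Real.pi_pos.le (hpos z); simp [hf]; linarith⟩
  have hfm : Measurable f := measurable_const.sub (measurable_const.mul hmeas)
  have hfi : Integrable f ν := by
    refine Integrable.mono' (integrable_const 1) hfm.aestronglyMeasurable
      (ae_of_all _ fun z => ?_)
    rw [Real.norm_eq_abs, abs_le]
    exact ⟨by linarith [(hfmem z).1], (hfmem z).2⟩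
  have hgi : Integrable (fun z => f z ^ k) ν := by
    refine Integrable.mono' (integrable_const 1) (hfm.pow_const k).aestronglyMeasurable
      (ae_of_all _ fun z => ?_)
    rw [Real.norm_eq_abs, abs_of_nonneg (pow_nonneg (hfmem z).1 k)]
    exact pow_le_one₀ (hfmem z).1 (hfmem z).2
  have hconv : ConvexOn ℝ (Set.Icc (0:ℝ) 1) (fun x => x ^ k) :=
    (convexOn_pow k).subset Set.Icc_subset_Ici_self (convex_Icc 0 1)
  have := hconv.map_integral_le (μ := ν) ((continuous_pow k).continuousOn) isClosed_Icc
    (ae_of_all _ hfmem) hfi hgi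
  rwa [hsmul f, hsmul (fun z => f z ^ k)] at this

/-- For every integer `n ≥ 1`, if `W` satisfies the minimal constraints and `W·ln W` and the
powers `W^k` for `1 ≤ k ≤ n+1` are integrable, then
`S[W] ≥ ln π + ∑_{k=1}^{n} (1/k) (1 − μ/2)^k`, where `μ = 2π ∫ W²` is the purity of `W`. -/
theorem wigner_entropy_purity_hierarchy (n : ℕ) (hn : 1 ≤ n)
    (W : ℝ × ℝ → ℝ) (hmeas : Measurable W)
    (hpos : ∀ z, 0 ≤ W z)
    (hnorm : ∫ z, W z = 1)
    (hbound : ∀ z, Real.pi * W z ≤ 1)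
    (hlog : Integrable (fun z => W z * Real.log (W z)))
    (hpow : ∀ k : ℕ, 1 ≤ k → k ≤ n + 1 → Integrable (fun z => (W z) ^ k)) :
    (-∫ z, W z * Real.log (W z))
      ≥ Real.log Real.pi
        + ∑ k ∈ Finset.Icc 1 n,
            (1 / (k : ℝ)) * (1 - (2 * Real.pi * ∫ z, (W z) ^ 2) / 2) ^ k := by
  have hW1 : Integrable W := by simpa using hpow 1 le_rfl (by omega)
  have hW2 : Integrable (fun z => W z ^ 2) := hpow 2 (by omega) (by omega)
  -- key pointwise identity: W log W = W log (π W) - W log π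
  have hpt : ∀ z, W z * Real.log (W z) = W z * Real.log (Real.pi * W z) - W z * Real.log Real.pi := by
    intro z
    rcases eq_or_lt_of_le (hpos z) with h | h
    · simp [← h]
    · rw [Real.log_mul (ne_of_gt Real.pi_pos) (ne_of_gt h)]; ring
  -- integrability of W log (π W)
  have hlogpi : Integrable (fun z => W z * Real.log (Real.pi * W z)) := by
    have : (fun z => W z * Real.log (Real.pi * W z))
        = fun z => W z * Real.log (W z) + Real.log Real.pi * W z := by
      funext z; rw [hpt z]; ring
    rw [this]
    exact hlog.add (hW1.const_mul _)
  -- integrability of W (1 - πW)^k, dominated by W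
  have hWf : ∀ k : ℕ, Integrable (fun z => W z * (1 - Real.pi * W z) ^ k) := by
    intro k
    refine Integrable.mono' hW1
      ((hmeas.mul ((measurable_const.sub (measurable_const.mul hmeas)).pow_const k)).aestronglyMeasurable)
      (ae_of_all _ fun z => ?_)
    have h0 : (0:ℝ) ≤ 1 - Real.pi * W z := by linarith [hbound z]
    have h1 : 1 - Real.pi * W z ≤ 1 := by
      have := mul_nonneg Real.pi_pos.le (hpos z); linarith
    rw [Real.norm_eq_abs, abs_of_nonneg (mul_nonneg (hpos z) (pow_nonneg h0 k))]
    calc W z * (1 - Real.pi * W z) ^ k ≤ W z * 1 :=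
          mul_le_mul_of_nonneg_left (pow_le_one₀ h0 h1) (hpos z)
      _ = W z := mul_one _
  -- the first moment equals 1 - π ∫ W²
  have hmom : ∫ z, W z * (1 - Real.pi * W z) = 1 - Real.pi * ∫ z, W z ^ 2 := by
    have heq : (fun z => W z * (1 - Real.pi * W z)) = fun z => W z - Real.pi * W z ^ 2 := by
      funext z; ring
    rw [heq, integral_sub hW1 (hW2.const_mul _), integral_const_mul, hnorm]
  have hμ : (1 - (2 * Real.pi * ∫ z, W z ^ 2) / 2) = ∫ z, W z * (1 - Real.pi * W z) := by
    rw [hmom]; ring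
  -- pointwise inequality: ∑ (1/k) W (1-πW)^k ≤ - W log(πW)
  have hptineq : ∀ z, ∑ k ∈ Finset.Icc 1 n, (1 / (k:ℝ)) * (W z * (1 - Real.pi * W z) ^ k)
      ≤ -(W z * Real.log (Real.pi * W z)) := by
    intro z
    rcases eq_or_lt_of_le (hpos z) with h | h
    · simp [← h]
    · have hx0 : 0 < Real.pi * W z := mul_pos Real.pi_pos h
      have key := wigner_log_series n (Real.pi * W z) hx0 (hbound z)
      calc ∑ k ∈ Finset.Icc 1 n, (1 / (k:ℝ)) * (W z * (1 - Real.pi * W z) ^ k)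
          = W z * ∑ k ∈ Finset.Icc 1 n, (1 / (k:ℝ)) * (1 - Real.pi * W z) ^ k := by
            rw [Finset.mul_sum]; exact Finset.sum_congr rfl fun k _ => by ring
        _ ≤ W z * (-Real.log (Real.pi * W z)) := mul_le_mul_of_nonneg_left key (hpos z)
        _ = -(W z * Real.log (Real.pi * W z)) := by ring
  -- integrate the pointwise inequality
  have hsumint : Integrable (fun z => ∑ k ∈ Finset.Icc 1 n,
      (1 / (k:ℝ)) * (W z * (1 - Real.pi * W z) ^ k)) := by
    apply integrable_finset_sum
    intro k _
    exact (hWf k).const_mul _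
  have hint : ∑ k ∈ Finset.Icc 1 n, (1 / (k:ℝ)) * ∫ z, W z * (1 - Real.pi * W z) ^ k
      ≤ -∫ z, W z * Real.log (Real.pi * W z) := by
    have h1 : ∫ z, ∑ k ∈ Finset.Icc 1 n, (1 / (k:ℝ)) * (W z * (1 - Real.pi * W z) ^ k)
        ≤ ∫ z, -(W z * Real.log (Real.pi * W z)) :=
      integral_mono hsumint hlogpi.neg hptineq
    rw [integral_finset_sum _ (fun k _ => (hWf k).const_mul _)] at h1
    simp only [integral_const_mul] at h1
    rwa [integral_neg] at h1
  -- Jensen on each term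
  have hjensen : ∑ k ∈ Finset.Icc 1 n, (1 / (k:ℝ)) * (1 - (2 * Real.pi * ∫ z, W z ^ 2) / 2) ^ k
      ≤ ∑ k ∈ Finset.Icc 1 n, (1 / (k:ℝ)) * ∫ z, W z * (1 - Real.pi * W z) ^ k := by
    apply Finset.sum_le_sum
    intro k hk
    have hk1 : (0:ℝ) ≤ 1 / (k:ℝ) := by positivity
    refine mul_le_mul_of_nonneg_left ?_ hk1
    rw [hμ]
    exact wigner_jensen_step W hmeas hpos hnorm hbound hW1 k
  -- put it together
  have hlogdecomp : ∫ z, W z * Real.log (W z)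
      = (∫ z, W z * Real.log (Real.pi * W z)) - Real.log Real.pi := by
    have : (fun z => W z * Real.log (W z))
        = fun z => W z * Real.log (Real.pi * W z) - Real.log Real.pi * W z := by
      funext z; rw [hpt z]; ring
    rw [this, integral_sub hlogpi (hW1.const_mul _), integral_const_mul, hnorm, mul_one]
  rw [ge_iff_le, hlogdecomp]
  have := le_trans hjensen hint
  linarith
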